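/- In the simplicial setup, let Γ₁, …, Γ_e be all the equivalence classes of B_A. Then M_B = ∪_{i=1}^e M_{Γ_i}. -/

import Mathlib

namespace SimplicialToric

/-- `eVec d α i` is `α` times the `i`-th standard basis vector of `ℕ^d`. -/
def eVec (d α : ℕ) (i : Fin d) : Fin d → ℕ := fun j => if j = i then α else 0

/-- The Hilbert basis of a submonoid `B ⊆ ℕ^d`: the set of irreducible elements
(in `ℕ^d` the only unit is `0`). -/
def Hilb {d : ℕ} (B : AddSubmonoid (Fin d → ℕ)) : Set (Fin d → ℕ) :=
  {b | b ∈ B ∧ b ≠ 0 ∧ ∀ x ∈ B, ∀ y ∈ B, b = x + y → x = 0 ∨ y = 0}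

/-- The submonoid `A = Σᵢ ℤ≥0·eᵢ = αℤ≥0^d`. -/
def Amon (d α : ℕ) : AddSubmonoid (Fin d → ℕ) :=
  AddSubmonoid.closure (Set.range (eVec d α))

/-- `B_A = {x ∈ B : x − a ∉ B for every a ∈ A \ {0}}`. -/
def BA {d : ℕ} (B : AddSubmonoid (Fin d → ℕ)) (α : ℕ) : Set (Fin d → ℕ) :=
  {x | x ∈ B ∧ ∀ z ∈ Amon d α, z ≠ 0 → ∀ y ∈ B, x ≠ y + z}

/-- The generators `a₁,…,a_c,e₁,…,e_d` of `B`, indexed by the variables of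
`S = K[x₁,…,x_c,y₁,…,y_d]`; variable `Fin.castAdd d i` is `xᵢ`, variable
`Fin.natAdd c j` is `yⱼ`. -/
def gens (c d α : ℕ) (a : Fin c → Fin d → ℕ) : Fin (c + d) → Fin d → ℕ :=
  Fin.addCases a (eVec d α)

/-- The element of `B` represented by the monomial with exponent vector `σ`:
`π(x^μ y^ν) = t^(valE σ)`. -/
def valE (c d α : ℕ) (a : Fin c → Fin d → ℕ) (σ : Fin (c + d) →₀ ℕ) : Fin d → ℕ :=
  ∑ v : Fin (c + d), σ v • gens c d α a v

/-- total degree of a monomial (exponent vector). -/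
def degE {N : ℕ} (σ : Fin N →₀ ℕ) : ℕ := ∑ v, σ v

/-- the graded reverse lexicographic order: `grevlex σ τ` means `σ ≺ τ`,
i.e. `deg σ < deg τ`, or degrees agree and the last nonzero entry of `τ − σ`
is negative. -/
def grevlex {N : ℕ} (σ τ : Fin N →₀ ℕ) : Prop :=
  degE σ < degE τ ∨ (degE σ = degE τ ∧ ∃ k, τ k < σ k ∧ ∀ l, k < l → σ l = τ l)

/-- `x ∼ y` iff `x − y ∈ gp(A) = αℤ^d`. -/
def Rel {d : ℕ} (α : ℕ) (x y : Fin d → ℕ) : Prop :=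
  ∀ j, (α : ℤ) ∣ (x j : ℤ) - (y j : ℤ)

/-- `Γ` is an equivalence class of `B_A` modulo `αℤ^d`. -/
def IsClass {d : ℕ} (B : AddSubmonoid (Fin d → ℕ)) (α : ℕ) (Γ : Set (Fin d → ℕ)) : Prop :=
  ∃ x ∈ BA B α, Γ = {y | y ∈ BA B α ∧ Rel α x y}

/-- the total order on an equivalence class of `B_A`: `b ≺ c` iff the last
nonzero entry of `b − c` is negative. -/
def ltCls {d : ℕ} (x y : Fin d → ℕ) : Prop :=
  ∃ k, x k < y k ∧ ∀ l, k < l → x l = y l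

/-- `joinSub x y = x∨y − y`, where `x∨y` is the componentwise maximum. -/
def joinSub {d : ℕ} (x y : Fin d → ℕ) : Fin d → ℕ := fun j => max (x j) (y j) - y j

/-- the monomial with exponents `σ` lies in `T = K[y₁,…,y_d]`. -/
def yOnly (c d : ℕ) (σ : Fin (c + d) →₀ ℕ) : Prop := ∀ i : Fin c, σ (Fin.castAdd d i) = 0

/-- the monomial with exponents `σ` involves only the `x`-variables. -/
def xOnly (c d : ℕ) (σ : Fin (c + d) →₀ ℕ) : Prop := ∀ j : Fin d, σ (Fin.natAdd c j) = 0

/-- the set `N₁`, for a given choice `m` of the minimal monomials `m_b`. -/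
def N1set (c d α : ℕ) (a : Fin c → Fin d → ℕ) (B : AddSubmonoid (Fin d → ℕ))
    (m : (Fin d → ℕ) → (Fin (c + d) →₀ ℕ)) : Set (Fin (c + d) →₀ ℕ) :=
  {n | ∃ (i : Fin c) (b : Fin d → ℕ), b ∈ BA B α ∧
    n = Finsupp.single (Fin.castAdd d i) 1 + m b ∧ n ≠ m (a i + b)}

/-- the set `N₂ = ∪_Γ N_Γ`, where `N_Γ = {n(bᵢ,bⱼ) = m_{bⱼ}·m_{bᵢ∨bⱼ−bⱼ} : bᵢ ≺ bⱼ in Γ}`. -/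
def N2set {d : ℕ} (c α : ℕ) (B : AddSubmonoid (Fin d → ℕ))
    (m : (Fin d → ℕ) → (Fin (c + d) →₀ ℕ)) : Set (Fin (c + d) →₀ ℕ) :=
  {n | ∃ Γ, IsClass B α Γ ∧ ∃ bi ∈ Γ, ∃ bj ∈ Γ, ltCls bi bj ∧ n = m bj + m (joinSub bi bj)}

/-- `σ` is the exponent vector of the initial (i.e. `≺`-largest) term of `f`. -/
def IsLeadMon {N : ℕ} {K : Type*} [Field K] (f : MvPolynomial (Fin N) K)
    (σ : Fin N →₀ ℕ) : Prop :=
  σ ∈ f.support ∧ ∀ τ ∈ f.support, τ = σ ∨ grevlex τ σ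

/-- the initial ideal of `I` with respect to the graded reverse lexicographic order. -/
noncomputable def initialIdeal {N : ℕ} {K : Type*} [Field K] (I : Ideal (MvPolynomial (Fin N) K)) :
    Ideal (MvPolynomial (Fin N) K) :=
  Ideal.span {g | ∃ f ∈ I, ∃ σ, IsLeadMon f σ ∧ g = MvPolynomial.monomial σ (1 : K)}

end SimplicialToric

open SimplicialToric

namespace SimplicialToric

/-- For an equivalence class \`Γ\` of \`B_A\` the set
\`M_Γ = ∪_{b ∈ Γ} (m_b·M_T \ ∪_{b' ≺ b in Γ} n(b',b)·M_T)\`. -/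
def MGamma (c d α : ℕ) (m : (Fin d → ℕ) → (Fin (c + d) →₀ ℕ)) (Γ : Set (Fin d → ℕ)) :
    Set (Fin (c + d) →₀ ℕ) :=
  {σ | ∃ b ∈ Γ, (∃ τ, yOnly c d τ ∧ σ = m b + τ) ∧
    ∀ b' ∈ Γ, ltCls b' b → ¬ ∃ τ, yOnly c d τ ∧ σ = (m b + m (joinSub b' b)) + τ}

end SimplicialToric
namespace SimplicialToric

variable {c d α : ℕ} {a : Fin c → Fin d → ℕ} {B : AddSubmonoid (Fin d → ℕ)}

lemma gens_castAdd (a : Fin c → Fin d → ℕ) (i : Fin c) :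
    gens c d α a (Fin.castAdd d i) = a i := by
  simp [gens]

lemma gens_natAdd (a : Fin c → Fin d → ℕ) (j : Fin d) :
    gens c d α a (Fin.natAdd c j) = eVec d α j := by
  simp [gens]

lemma valE_add (σ τ : Fin (c + d) →₀ ℕ) :
    valE c d α a (σ + τ) = valE c d α a σ + valE c d α a τ := by
  simp [valE, Finsupp.add_apply, add_smul, Finset.sum_add_distrib]

lemma valE_apply (σ : Fin (c + d) →₀ ℕ) (j : Fin d) :
    valE c d α a σ j = ∑ v, σ v * gens c d α a v j := by
  simp [valE, Finset.sum_apply]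

lemma valE_single (v : Fin (c + d)) (n : ℕ) :
    valE c d α a (Finsupp.single v n) = n • gens c d α a v := by
  simp [valE, Finsupp.single_apply, ite_smul, Finset.sum_ite_eq]

lemma sum_gens (hdeg : ∀ i, ∑ j, a i j = α) (v : Fin (c + d)) :
    ∑ j, gens c d α a v j = α := by
  refine Fin.addCases (fun i => ?_) (fun i => ?_) v
  · simp [gens_castAdd, hdeg]
  · simp [gens_natAdd, eVec, Finset.sum_ite_eq']

lemma sum_valE (hdeg : ∀ i, ∑ j, a i j = α) (σ : Fin (c + d) →₀ ℕ) :
    ∑ j, valE c d α a σ j = α * degE σ := by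
  simp only [valE_apply]
  rw [Finset.sum_comm]
  simp only [← Finset.mul_sum, sum_gens hdeg]
  rw [degE, ← Finset.sum_mul, mul_comm]

lemma degE_eq_of_valE (hα : 0 < α) (hdeg : ∀ i, ∑ j, a i j = α) {σ τ : Fin (c + d) →₀ ℕ}
    (h : valE c d α a σ = valE c d α a τ) : degE σ = degE τ :=
  Nat.eq_of_mul_eq_mul_left hα (by rw [← sum_valE hdeg, ← sum_valE hdeg, h])

lemma mem_B_of_rep (hBgen : B = AddSubmonoid.closure (Set.range a ∪ Set.range (eVec d α)))
    (σ : Fin (c + d) →₀ ℕ) : valE c d α a σ ∈ B := by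
  subst hBgen
  refine AddSubmonoid.sum_mem _ (fun v _ => AddSubmonoid.nsmul_mem _ ?_ _)
  refine Fin.addCases (fun i => ?_) (fun i => ?_) v
  · exact AddSubmonoid.subset_closure (Or.inl ⟨i, (gens_castAdd a i).symm⟩)
  · exact AddSubmonoid.subset_closure (Or.inr ⟨i, (gens_natAdd a i).symm⟩)

lemma rep_of_mem_B (hBgen : B = AddSubmonoid.closure (Set.range a ∪ Set.range (eVec d α)))
    {b : Fin d → ℕ} (hb : b ∈ B) : ∃ σ, valE c d α a σ = b := by
  subst hBgen
  induction hb using AddSubmonoid.closure_induction with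
  | mem x hx =>
    rcases hx with ⟨i, rfl⟩ | ⟨i, rfl⟩
    · exact ⟨Finsupp.single (Fin.castAdd d i) 1, by simp [valE_single, gens_castAdd]⟩
    · exact ⟨Finsupp.single (Fin.natAdd c i) 1, by simp [valE_single, gens_natAdd]⟩
  | zero => exact ⟨0, by simp [valE]⟩
  | add x y _ _ hx hy =>
    obtain ⟨σ, rfl⟩ := hx; obtain ⟨τ, rfl⟩ := hy
    exact ⟨σ + τ, valE_add σ τ⟩

end SimplicialToric
namespace SimplicialToric

variable {c d α : ℕ} {a : Fin c → Fin d → ℕ} {B : AddSubmonoid (Fin d → ℕ)}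

lemma grevlex_asymm {N : ℕ} {σ τ : Fin N →₀ ℕ} (h1 : grevlex σ τ) (h2 : grevlex τ σ) : False := by
  rcases h1 with h1 | ⟨hd1, k1, hk1, ha1⟩ <;>
    rcases h2 with h2 | ⟨hd2, k2, hk2, ha2⟩ <;> try omega
  rcases lt_trichotomy k1 k2 with h | h | h
  · have := ha1 k2 h; omega
  · subst h; omega
  · have := ha2 k1 h; omega

lemma grevlex_irrefl {N : ℕ} {σ : Fin N →₀ ℕ} (h : grevlex σ σ) : False :=
  grevlex_asymm h h

lemma degE_add {N : ℕ} (σ τ : Fin N →₀ ℕ) : degE (σ + τ) = degE σ + degE τ := by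
  simp [degE, Finset.sum_add_distrib]

lemma grevlex_add_right {N : ℕ} {σ τ : Fin N →₀ ℕ} (ρ : Fin N →₀ ℕ) (h : grevlex σ τ) :
    grevlex (σ + ρ) (τ + ρ) := by
  rcases h with h | ⟨hd, k, hk, ha⟩
  · left; simp only [degE_add]; omega
  · right
    refine ⟨by simp only [degE_add]; omega, k, ?_, fun l hl => ?_⟩
    · simp only [Finsupp.add_apply]; omega
    · have := ha l hl; simp only [Finsupp.add_apply]; omega

lemma exists_last_diff {n : ℕ} {f g : Fin n → ℕ} (h : f ≠ g) :
    ∃ k, f k ≠ g k ∧ ∀ l, k < l → f l = g l := by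
  have hne : (Finset.univ.filter fun k => f k ≠ g k).Nonempty := by
    by_contra h'
    rw [Finset.not_nonempty_iff_eq_empty, Finset.filter_eq_empty_iff] at h'
    exact h (funext fun k => by_contra fun hk => h' (Finset.mem_univ k) hk)
  refine ⟨(Finset.univ.filter fun k => f k ≠ g k).max' hne, ?_, fun l hl => ?_⟩
  · have := Finset.max'_mem _ hne; simp at this; exact this
  · by_contra hl'
    have := Finset.le_max' (Finset.univ.filter fun k => f k ≠ g k) l (by simp [hl'])
    omega

/-- characterization of `m b`. -/
lemma m_eq {m : (Fin d → ℕ) → (Fin (c + d) →₀ ℕ)}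
    (hmval : ∀ b ∈ B, valE c d α a (m b) = b)
    (hmmin : ∀ b ∈ B, ∀ σ, valE c d α a σ = b → m b = σ ∨ grevlex (m b) σ)
    {b : Fin d → ℕ} {σ : Fin (c + d) →₀ ℕ} (hbB : b ∈ B) (hσ : valE c d α a σ = b)
    (hmin : ∀ τ, valE c d α a τ = b → σ = τ ∨ grevlex σ τ) : m b = σ := by
  rcases hmmin b hbB σ hσ with h | h
  · exact h
  · rcases hmin (m b) (hmval b hbB) with h2 | h2
    · exact h2.symm
    · exact absurd h2 (fun h2 => grevlex_asymm h h2)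

lemma Amon_le_B (hBgen : B = AddSubmonoid.closure (Set.range a ∪ Set.range (eVec d α))) :
    Amon d α ≤ B := by
  subst hBgen
  exact AddSubmonoid.closure_mono Set.subset_union_right

lemma mem_Amon_iff (hα : 0 < α) {z : Fin d → ℕ} : z ∈ Amon d α ↔ ∀ j, α ∣ z j := by
  constructor
  · intro hz
    induction hz using AddSubmonoid.closure_induction with
    | mem x hx => rcases hx with ⟨i, rfl⟩; intro j; by_cases h : j = i <;> simp [eVec, h]
    | zero => intro j; simp
    | add x y _ _ hx hy => intro j; exact dvd_add (hx j) (hy j)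
  · intro h
    have : z = ∑ j, (z j / α) • eVec d α j := by
      funext j'
      simp only [Finset.sum_apply, Pi.smul_apply, eVec, smul_eq_mul, mul_ite, mul_zero,
        Finset.sum_ite_eq]
      simp [Nat.div_mul_cancel (h j')]
    rw [this]
    exact AddSubmonoid.sum_mem _ fun j _ =>
      AddSubmonoid.nsmul_mem _ (AddSubmonoid.subset_closure (Set.mem_range_self j)) _

end SimplicialToric
namespace SimplicialToric

variable {c d α : ℕ} {a : Fin c → Fin d → ℕ} {B : AddSubmonoid (Fin d → ℕ)}

/-- the pure-`y` monomial with value `z` (for `z` with coordinates divisible by `α`). -/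
noncomputable def ySig (c d α : ℕ) (z : Fin d → ℕ) : Fin (c + d) →₀ ℕ :=
  Finsupp.equivFunOnFinite.symm (Fin.addCases 0 (fun j => z j / α))

@[simp] lemma ySig_castAdd (z : Fin d → ℕ) (i : Fin c) :
    ySig c d α z (Fin.castAdd d i) = 0 := by
  simp [ySig, Finsupp.coe_equivFunOnFinite_symm]

@[simp] lemma ySig_natAdd (z : Fin d → ℕ) (j : Fin d) :
    ySig c d α z (Fin.natAdd c j) = z j / α := by
  simp [ySig, Finsupp.coe_equivFunOnFinite_symm]

lemma yOnly_ySig (z : Fin d → ℕ) : yOnly c d (ySig c d α z) := fun i => ySig_castAdd z i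

/-- x-part of a monomial. -/
noncomputable def xpart (c d : ℕ) (σ : Fin (c + d) →₀ ℕ) : Fin (c + d) →₀ ℕ :=
  Finsupp.equivFunOnFinite.symm (Fin.addCases (fun i => σ (Fin.castAdd d i)) 0)

/-- y-part of a monomial. -/
noncomputable def ypart (c d : ℕ) (σ : Fin (c + d) →₀ ℕ) : Fin (c + d) →₀ ℕ :=
  Finsupp.equivFunOnFinite.symm (Fin.addCases 0 (fun j => σ (Fin.natAdd c j)))

@[simp] lemma xpart_castAdd (σ : Fin (c + d) →₀ ℕ) (i : Fin c) :
    xpart c d σ (Fin.castAdd d i) = σ (Fin.castAdd d i) := by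
  simp [xpart, Finsupp.coe_equivFunOnFinite_symm]

@[simp] lemma xpart_natAdd (σ : Fin (c + d) →₀ ℕ) (j : Fin d) :
    xpart c d σ (Fin.natAdd c j) = 0 := by
  simp [xpart, Finsupp.coe_equivFunOnFinite_symm]

@[simp] lemma ypart_castAdd (σ : Fin (c + d) →₀ ℕ) (i : Fin c) :
    ypart c d σ (Fin.castAdd d i) = 0 := by
  simp [ypart, Finsupp.coe_equivFunOnFinite_symm]

@[simp] lemma ypart_natAdd (σ : Fin (c + d) →₀ ℕ) (j : Fin d) :
    ypart c d σ (Fin.natAdd c j) = σ (Fin.natAdd c j) := by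
  simp [ypart, Finsupp.coe_equivFunOnFinite_symm]

lemma yOnly_ypart (σ : Fin (c + d) →₀ ℕ) : yOnly c d (ypart c d σ) := fun i => ypart_castAdd σ i

lemma xpart_add_ypart (σ : Fin (c + d) →₀ ℕ) : xpart c d σ + ypart c d σ = σ := by
  ext v
  refine Fin.addCases (fun i => ?_) (fun j => ?_) v <;> simp

lemma valE_split (σ : Fin (c + d) →₀ ℕ) :
    valE c d α a σ =
      (∑ i, σ (Fin.castAdd d i) • a i) + ∑ j, σ (Fin.natAdd c j) • eVec d α j := by
  rw [valE, Fin.sum_univ_add]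
  simp [gens_castAdd, gens_natAdd]

lemma sum_smul_eVec_apply (k : Fin d → ℕ) (j' : Fin d) :
    (∑ j, k j • eVec d α j) j' = k j' * α := by
  simp only [Finset.sum_apply, Pi.smul_apply, eVec, smul_eq_mul, mul_ite, mul_zero,
    Finset.sum_ite_eq]
  simp

lemma valE_yOnly_apply {τ : Fin (c + d) →₀ ℕ} (hτ : yOnly c d τ) (j : Fin d) :
    valE c d α a τ j = τ (Fin.natAdd c j) * α := by
  rw [valE_split]
  simp only [Pi.add_apply, sum_smul_eVec_apply]
  have : ∀ i : Fin c, τ (Fin.castAdd d i) • a i = 0 := fun i => by rw [hτ i]; simp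
  simp [this]

lemma valE_yOnly_mem_Amon (hα : 0 < α) {τ : Fin (c + d) →₀ ℕ} (hτ : yOnly c d τ) :
    valE c d α a τ ∈ Amon d α :=
  (mem_Amon_iff hα).2 fun j => by rw [valE_yOnly_apply hτ]; exact dvd_mul_left α _

lemma valE_ySig (hα : 0 < α) {z : Fin d → ℕ} (hz : ∀ j, α ∣ z j) :
    valE c d α a (ySig c d α z) = z := by
  funext j
  rw [valE_yOnly_apply (yOnly_ySig z), ySig_natAdd, Nat.div_mul_cancel (hz j)]

lemma yOnly_inj (hα : 0 < α) {τ τ' : Fin (c + d) →₀ ℕ} (hτ : yOnly c d τ) (hτ' : yOnly c d τ')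
    (h : valE c d α a τ = valE c d α a τ') : τ = τ' := by
  ext v
  refine Fin.addCases (fun i => ?_) (fun j => ?_) v
  · rw [hτ i, hτ' i]
  · have := congrFun h j
    rw [valE_yOnly_apply hτ, valE_yOnly_apply hτ'] at this
    exact Nat.eq_of_mul_eq_mul_right hα this

lemma Rel.rfl' (x : Fin d → ℕ) : Rel α x x := fun j => by simp

lemma Rel.symm' {x y : Fin d → ℕ} (h : Rel α x y) : Rel α y x := fun j => by
  have := h j
  have : (α : ℤ) ∣ -((x j : ℤ) - y j) := dvd_neg.mpr this
  simpa [neg_sub] using this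

lemma Rel.trans' {x y z : Fin d → ℕ} (h1 : Rel α x y) (h2 : Rel α y z) : Rel α x z := fun j => by
  have := dvd_add (h1 j) (h2 j)
  simpa [sub_add_sub_cancel] using this

lemma dvd_joinSub {x y : Fin d → ℕ} (h : Rel α x y) (j : Fin d) : α ∣ joinSub x y j := by
  rcases le_total (x j) (y j) with h' | h'
  · simp [joinSub, max_eq_right h', Nat.sub_eq_zero_of_le h']
  · rw [joinSub]
    simp only [max_eq_left h']
    have hj := h j
    have : ((x j - y j : ℕ) : ℤ) = (x j : ℤ) - y j := by
      rw [Nat.cast_sub h']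
    exact Int.natCast_dvd_natCast.mp (by rw [this]; exact hj)

lemma joinSub_mem_Amon (hα : 0 < α) {x y : Fin d → ℕ} (h : Rel α x y) :
    joinSub x y ∈ Amon d α :=
  (mem_Amon_iff hα).2 (dvd_joinSub h)

lemma add_joinSub (x y : Fin d → ℕ) : y + joinSub x y = fun j => max (x j) (y j) := by
  funext j
  simp only [Pi.add_apply, joinSub]
  omega

end SimplicialToric
namespace SimplicialToric

variable {c d α : ℕ} {a : Fin c → Fin d → ℕ} {B : AddSubmonoid (Fin d → ℕ)}

lemma eq_natAdd_of_le {l : Fin (c + d)} (h : c ≤ l.val) : ∃ j : Fin d, l = Fin.natAdd c j := by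
  refine ⟨⟨l.val - c, by omega⟩, ?_⟩
  ext
  simp [Fin.natAdd]
  omega

/-- if `σ` and `τ` have the same degree, the `y`-exponents of `σ` dominate those of `τ`,
and strictly somewhere, then `σ ≺ τ`. -/
lemma grevlex_of_y_ge {σ τ : Fin (c + d) →₀ ℕ} (hdeg : degE σ = degE τ)
    (hge : ∀ j : Fin d, τ (Fin.natAdd c j) ≤ σ (Fin.natAdd c j))
    (j0 : Fin d) (hj0 : τ (Fin.natAdd c j0) < σ (Fin.natAdd c j0)) : grevlex σ τ := by
  right
  refine ⟨hdeg, ?_⟩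
  set s := Finset.univ.filter (fun j : Fin d => τ (Fin.natAdd c j) < σ (Fin.natAdd c j)) with hs
  have hne : s.Nonempty := ⟨j0, by simp [hs, hj0]⟩
  set k := s.max' hne with hkdef
  have hk : τ (Fin.natAdd c k) < σ (Fin.natAdd c k) := by
    have := s.max'_mem hne
    simp only [hs, Finset.mem_filter] at this
    exact this.2
  refine ⟨Fin.natAdd c k, hk, fun l hl => ?_⟩
  have hlv : (Fin.natAdd c k).val < l.val := hl
  have hcl : c ≤ l.val := by simp only [Fin.natAdd] at hlv; omega
  obtain ⟨j, rfl⟩ := eq_natAdd_of_le hcl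
  have hkj : k < j := by
    simp only [Fin.natAdd] at hlv
    exact Fin.lt_def.mpr (by omega)
  have hnlt : ¬ τ (Fin.natAdd c j) < σ (Fin.natAdd c j) := fun hlt =>
    absurd (s.le_max' j (by simp [hs, hlt])) (not_le.mpr hkj)
  have := hge j
  omega

lemma xsum_zero (hα : 0 < α) (hdeg : ∀ i, ∑ j, a i j = α) {τ : Fin (c + d) →₀ ℕ}
    (h : ∀ j, (∑ i, τ (Fin.castAdd d i) • a i) j = 0) : ∀ i, τ (Fin.castAdd d i) = 0 := by
  have hsum : ∑ i, τ (Fin.castAdd d i) * α = 0 := by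
    calc ∑ i, τ (Fin.castAdd d i) * α
        = ∑ i, ∑ j, τ (Fin.castAdd d i) * a i j := by
          simp only [← Finset.mul_sum]
          exact Finset.sum_congr rfl fun i _ => by rw [hdeg]
      _ = ∑ j, ∑ i, τ (Fin.castAdd d i) * a i j := Finset.sum_comm
      _ = ∑ j, (∑ i, τ (Fin.castAdd d i) • a i) j := by simp [Finset.sum_apply]
      _ = 0 := Finset.sum_eq_zero fun j _ => h j
  intro i
  have := Finset.sum_eq_zero_iff.mp hsum i (Finset.mem_univ i)
  rcases Nat.mul_eq_zero.mp this with h' | h'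
  · exact h'
  · omega

lemma m_Amon (hα : 0 < α)
    (hBgen : B = AddSubmonoid.closure (Set.range a ∪ Set.range (eVec d α)))
    (hdeg : ∀ i, ∑ j, a i j = α)
    {m : (Fin d → ℕ) → (Fin (c + d) →₀ ℕ)}
    (hmval : ∀ b ∈ B, valE c d α a (m b) = b)
    (hmmin : ∀ b ∈ B, ∀ σ, valE c d α a σ = b → m b = σ ∨ grevlex (m b) σ)
    {z : Fin d → ℕ} (hz : z ∈ Amon d α) : m z = ySig c d α z := by
  have hzd := (mem_Amon_iff hα).1 hz
  have hzB : z ∈ B := Amon_le_B hBgen hz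
  refine m_eq hmval hmmin hzB (valE_ySig hα hzd) (fun τ hτ => ?_)
  by_cases hne : ySig c d α z = τ
  · exact Or.inl hne
  right
  have hdegeq : degE (ySig c d α z) = degE τ :=
    degE_eq_of_valE hα hdeg (by rw [valE_ySig hα hzd, hτ])
  have hval : ∀ j, (∑ i, τ (Fin.castAdd d i) • a i) j + τ (Fin.natAdd c j) * α = z j := by
    intro j
    have h2 := congrFun hτ j
    rw [valE_split, Pi.add_apply, sum_smul_eVec_apply] at h2
    exact h2
  have hge : ∀ j, τ (Fin.natAdd c j) ≤ ySig c d α z (Fin.natAdd c j) := by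
    intro j
    rw [ySig_natAdd]
    have := hval j
    have h2 : τ (Fin.natAdd c j) * α ≤ z j := by omega
    exact Nat.le_div_iff_mul_le hα |>.mpr h2
  by_cases hstrict : ∃ j, τ (Fin.natAdd c j) < z j / α
  · obtain ⟨j0, hj0⟩ := hstrict
    exact grevlex_of_y_ge hdegeq hge j0 (by rwa [ySig_natAdd])
  · exfalso
    push_neg at hstrict
    have heqy : ∀ j, τ (Fin.natAdd c j) = z j / α := by
      intro j
      have h1 := hge j
      rw [ySig_natAdd] at h1
      exact le_antisymm h1 (hstrict j)
    have hx0 : ∀ j, (∑ i, τ (Fin.castAdd d i) • a i) j = 0 := by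
      intro j
      have := hval j
      rw [heqy j, Nat.div_mul_cancel (hzd j)] at this
      omega
    refine hne (Finsupp.ext fun v => ?_)
    refine Fin.addCases (fun i => ?_) (fun j => ?_) v
    · rw [ySig_castAdd, xsum_zero hα hdeg hx0 i]
    · rw [ySig_natAdd, heqy j]

end SimplicialToric
namespace SimplicialToric

variable {c d α : ℕ} {a : Fin c → Fin d → ℕ} {B : AddSubmonoid (Fin d → ℕ)}

lemma mem_BA (hα : 0 < α)
    (hBgen : B = AddSubmonoid.closure (Set.range a ∪ Set.range (eVec d α)))
    {b : Fin d → ℕ} (hb : b ∈ B)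
    (h : ∀ j, ∀ w ∈ B, b ≠ w + eVec d α j) : b ∈ BA B α := by
  refine ⟨hb, fun z hz hz0 y hy heq => ?_⟩
  have hzd := (mem_Amon_iff hα).1 hz
  have hex : ∃ j, z j ≠ 0 := by
    by_contra h'
    push_neg at h'
    exact hz0 (funext h')
  obtain ⟨j, hj⟩ := hex
  have hαle : α ≤ z j := Nat.le_of_dvd (Nat.pos_of_ne_zero hj) (hzd j)
  set z' : Fin d → ℕ := fun j' => z j' - eVec d α j j' with hz'
  have hz'A : z' ∈ Amon d α := by
    refine (mem_Amon_iff hα).2 (fun j' => ?_)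
    by_cases h' : j' = j
    · subst h'
      simp only [hz', eVec, if_pos rfl]
      exact Nat.dvd_sub (hzd j') dvd_rfl
    · simp only [hz', eVec, if_neg h']
      simpa using hzd j'
  have hzz : z = z' + eVec d α j := by
    funext j'
    by_cases h' : j' = j
    · subst h'
      simp only [Pi.add_apply, hz', eVec]
      simp
      omega
    · simp [hz', eVec, h']
  exact h j (y + z') (AddSubmonoid.add_mem B hy (Amon_le_B hBgen hz'A))
    (by rw [heq, hzz, ← add_assoc])

lemma rep_xOnly_of_BA (hα : 0 < α)
    (hBgen : B = AddSubmonoid.closure (Set.range a ∪ Set.range (eVec d α)))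
    {b : Fin d → ℕ} (hb : b ∈ BA B α) {σ : Fin (c + d) →₀ ℕ}
    (hσ : valE c d α a σ = b) : xOnly c d σ := by
  intro j
  by_contra hj
  set σ' := σ - Finsupp.single (Fin.natAdd c j) 1 with hσ'
  have hds : σ' + Finsupp.single (Fin.natAdd c j) 1 = σ := by
    ext v
    simp only [hσ', Finsupp.add_apply, Finsupp.tsub_apply, Finsupp.single_apply]
    by_cases h' : Fin.natAdd c j = v
    · subst h'
      simp only [if_pos rfl]
      simp
      omega
    · simp [h']
  have hval : b = valE c d α a σ' + eVec d α j := by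
    rw [← hσ, ← hds, valE_add, valE_single, one_smul, gens_natAdd]
  refine hb.2 (eVec d α j) (AddSubmonoid.subset_closure (Set.mem_range_self j))
    (fun h0 => ?_) (valE c d α a σ') (mem_B_of_rep hBgen σ') hval
  have := congrFun h0 j
  simp [eVec] at this
  omega

lemma swap_grevlex (hα : 0 < α)
    (hBgen : B = AddSubmonoid.closure (Set.range a ∪ Set.range (eVec d α)))
    (hdeg : ∀ i, ∑ j, a i j = α)
    {m : (Fin d → ℕ) → (Fin (c + d) →₀ ℕ)}
    (hmval : ∀ b ∈ B, valE c d α a (m b) = b)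
    {b1 b2 : Fin d → ℕ} (hb1 : b1 ∈ BA B α) (hb2 : b2 ∈ BA B α)
    (hrel : Rel α b1 b2) (hlt : ltCls b1 b2) :
    grevlex (m b1 + ySig c d α (joinSub b2 b1)) (m b2 + ySig c d α (joinSub b1 b2)) := by
  obtain ⟨k, hk, hka⟩ := hlt
  have hx1 : xOnly c d (m b1) := rep_xOnly_of_BA hα hBgen hb1 (hmval b1 hb1.1)
  have hx2 : xOnly c d (m b2) := rep_xOnly_of_BA hα hBgen hb2 (hmval b2 hb2.1)
  have hv : valE c d α a (m b1 + ySig c d α (joinSub b2 b1)) =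
      valE c d α a (m b2 + ySig c d α (joinSub b1 b2)) := by
    rw [valE_add, valE_add, hmval b1 hb1.1, hmval b2 hb2.1,
      valE_ySig hα (dvd_joinSub (Rel.symm' hrel)), valE_ySig hα (dvd_joinSub hrel),
      add_joinSub, add_joinSub]
    funext j
    exact max_comm _ _
  right
  refine ⟨degE_eq_of_valE hα hdeg hv, Fin.natAdd c k, ?_, fun l hl => ?_⟩
  · have hdvd : α ∣ b2 k - b1 k := by
      have := dvd_joinSub (Rel.symm' hrel) k
      rwa [joinSub, max_eq_left (le_of_lt hk)] at this
    have hpos : 0 < (b2 k - b1 k) / α := Nat.div_pos (Nat.le_of_dvd (by omega) hdvd) hα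
    simp only [Finsupp.add_apply, hx1 k, hx2 k, ySig_natAdd, joinSub,
      max_eq_left (le_of_lt hk), max_eq_right (le_of_lt hk), Nat.sub_self, Nat.zero_div]
    omega
  · have hlv : (Fin.natAdd c k).val < l.val := hl
    have hcl : c ≤ l.val := by simp only [Fin.natAdd] at hlv; omega
    obtain ⟨j, rfl⟩ := eq_natAdd_of_le hcl
    have hkj : k < j := by
      simp only [Fin.natAdd] at hlv
      exact Fin.lt_def.mpr (by omega)
    simp only [Finsupp.add_apply, hx1 j, hx2 j, ySig_natAdd, joinSub, hka j hkj,
      max_self]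

lemma xval_mem_BA (hα : 0 < α)
    (hBgen : B = AddSubmonoid.closure (Set.range a ∪ Set.range (eVec d α)))
    (hdeg : ∀ i, ∑ j, a i j = α)
    {m : (Fin d → ℕ) → (Fin (c + d) →₀ ℕ)}
    (hmval : ∀ b ∈ B, valE c d α a (m b) = b)
    (hmmin : ∀ b ∈ B, ∀ σ, valE c d α a σ = b → m b = σ ∨ grevlex (m b) σ)
    {b : Fin d → ℕ} (hb : b ∈ B) :
    valE c d α a (xpart c d (m b)) ∈ BA B α := by
  set μ := xpart c d (m b) with hμ
  refine mem_BA hα hBgen (mem_B_of_rep hBgen μ) (fun j w hw heq => ?_)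
  obtain ⟨ρ, hρ⟩ := rep_of_mem_B hBgen hw
  set σ' := ρ + Finsupp.single (Fin.natAdd c j) 1 + ypart c d (m b) with hσ'
  have hsplit : valE c d α a μ + valE c d α a (ypart c d (m b)) = b := by
    rw [← valE_add, xpart_add_ypart, hmval b hb]
  have hval : valE c d α a σ' = b := by
    rw [hσ', valE_add, valE_add, hρ, valE_single, one_smul, gens_natAdd]
    rw [heq] at hsplit
    exact hsplit
  have hdegeq : degE σ' = degE (m b) := by
    refine degE_eq_of_valE hα hdeg ?_
    rw [hval, hmval b hb]
  have happ : ∀ j', σ' (Fin.natAdd c j') =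
      ρ (Fin.natAdd c j') + (if Fin.natAdd c j = Fin.natAdd c j' then 1 else 0)
        + (m b) (Fin.natAdd c j') := by
    intro j'
    simp [hσ', Finsupp.single_apply]
  have hge : ∀ j', (m b) (Fin.natAdd c j') ≤ σ' (Fin.natAdd c j') := fun j' =>
    (happ j') ▸ Nat.le_add_left _ _
  have hstrict : (m b) (Fin.natAdd c j) < σ' (Fin.natAdd c j) := by
    rw [happ j, if_pos rfl]
    omega
  rcases hmmin b hb σ' hval with h | h
  · rw [← h] at hstrict
    omega
  · exact grevlex_asymm h (grevlex_of_y_ge hdegeq hge j hstrict)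

lemma mb_decomp (hα : 0 < α)
    (hBgen : B = AddSubmonoid.closure (Set.range a ∪ Set.range (eVec d α)))
    {m : (Fin d → ℕ) → (Fin (c + d) →₀ ℕ)}
    (hmval : ∀ b ∈ B, valE c d α a (m b) = b)
    (hmmin : ∀ b ∈ B, ∀ σ, valE c d α a σ = b → m b = σ ∨ grevlex (m b) σ)
    {b : Fin d → ℕ} (hb : b ∈ B) :
    m b = m (valE c d α a (xpart c d (m b))) + ypart c d (m b) := by
  set μ := xpart c d (m b) with hμ
  set bx := valE c d α a μ with hbx
  have hbxB : bx ∈ B := mem_B_of_rep hBgen μ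
  have hsplit : valE c d α a μ + valE c d α a (ypart c d (m b)) = b := by
    rw [← valE_add, xpart_add_ypart, hmval b hb]
  have hval2 : valE c d α a (m bx + ypart c d (m b)) = b := by
    rw [valE_add, hmval bx hbxB]
    exact hsplit
  rcases hmmin bx hbxB μ hbx.symm with h | h
  · rw [h, xpart_add_ypart]
  · have hg : grevlex (m bx + ypart c d (m b)) (m b) := by
      have := grevlex_add_right (ypart c d (m b)) h
      rwa [hμ, xpart_add_ypart] at this
    rcases hmmin b hb _ hval2 with h2 | h2
    · exact h2
    · exact (grevlex_asymm h2 hg).elim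

end SimplicialToric
namespace SimplicialToric

variable {c d α : ℕ} {a : Fin c → Fin d → ℕ} {B : AddSubmonoid (Fin d → ℕ)}

lemma split_yOnly (hα : 0 < α) {τ : Fin (c + d) →₀ ℕ} (hτ : yOnly c d τ) {g : Fin d → ℕ}
    (hg : ∀ j, α ∣ g j) (hle : ∀ j, g j ≤ valE c d α a τ j) :
    ∃ τ'', yOnly c d τ'' ∧ τ = ySig c d α g + τ'' := by
  have hyle : ∀ j, g j / α ≤ τ (Fin.natAdd c j) := by
    intro j
    have h1 := hle j
    rw [valE_yOnly_apply hτ] at h1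
    obtain ⟨t, ht⟩ := hg j
    rw [ht, Nat.mul_div_cancel_left t hα]
    rw [ht, mul_comm (τ (Fin.natAdd c j)) α] at h1
    exact Nat.le_of_mul_le_mul_left h1 hα
  refine ⟨Finsupp.equivFunOnFinite.symm (fun v => τ v - ySig c d α g v), fun i => ?_, ?_⟩
  · simp [Finsupp.coe_equivFunOnFinite_symm, hτ i]
  · ext v
    refine Fin.addCases (fun i => ?_) (fun j => ?_) v
    · simp [Finsupp.coe_equivFunOnFinite_symm, hτ i]
    · simp only [Finsupp.add_apply, ySig_natAdd, Finsupp.coe_equivFunOnFinite_symm]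
      have := hyle j
      omega

end SimplicialToric
/-- `M_B = ∪ᵢ M_{Γᵢ}`, the union over all equivalence classes of `B_A`. -/
theorem MB_eq_union_MGamma
    (c d α : ℕ) (hα : 0 < α)
    (a : Fin c → Fin d → ℕ) (B : AddSubmonoid (Fin d → ℕ))
    (hBgen : B = AddSubmonoid.closure (Set.range a ∪ Set.range (eVec d α)))
    (hhilb : Hilb B = Set.range a ∪ Set.range (eVec d α))
    (hdeg : ∀ i, ∑ j, a i j = α)
    (m : (Fin d → ℕ) → (Fin (c + d) →₀ ℕ))
    (hmval : ∀ b ∈ B, valE c d α a (m b) = b)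
    (hmmin : ∀ b ∈ B, ∀ σ, valE c d α a σ = b → m b = σ ∨ grevlex (m b) σ) :
    {σ : Fin (c + d) →₀ ℕ | ∃ b ∈ (B : Set (Fin d → ℕ)), σ = m b}
      = {σ | ∃ Γ, IsClass B α Γ ∧ σ ∈ MGamma c d α m Γ} := by
  ext σ
  simp only [Set.mem_setOf_eq]
  constructor
  · rintro ⟨b, hb, rfl⟩
    set bx := valE c d α a (xpart c d (m b)) with hbx
    have hbxBA : bx ∈ BA B α := xval_mem_BA hα hBgen hdeg hmval hmmin hb
    have hdecomp : m b = m bx + ypart c d (m b) := mb_decomp hα hBgen hmval hmmin hb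
    refine ⟨{y | y ∈ BA B α ∧ Rel α bx y}, ⟨bx, hbxBA, rfl⟩, bx, ⟨hbxBA, Rel.rfl' bx⟩,
      ⟨ypart c d (m b), yOnly_ypart _, hdecomp⟩, ?_⟩
    rintro b' ⟨hb'BA, hrel⟩ hlt ⟨τ, hτy, hστ⟩
    have hrel' : Rel α b' bx := Rel.symm' hrel
    have hgA : joinSub b' bx ∈ Amon d α := joinSub_mem_Amon hα hrel'
    have hmg : m (joinSub b' bx) = ySig c d α (joinSub b' bx) :=
      m_Amon hα hBgen hdeg hmval hmmin hgA
    rw [hmg] at hστ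
    have hswap := swap_grevlex hα hBgen hdeg hmval hb'BA hbxBA hrel' hlt
    have hgl : grevlex ((m b' + ySig c d α (joinSub bx b')) + τ) (m b) := by
      rw [hστ]
      exact grevlex_add_right τ hswap
    have hval' : valE c d α a ((m b' + ySig c d α (joinSub bx b')) + τ) = b := by
      rw [valE_add, valE_add, hmval b' hb'BA.1, valE_ySig hα (dvd_joinSub hrel), add_joinSub]
      have hb2 : b = valE c d α a ((m bx + ySig c d α (joinSub b' bx)) + τ) := by
        rw [← hστ]
        exact (hmval b hb).symm
      rw [valE_add, valE_add, hmval bx hbxBA.1, valE_ySig hα (dvd_joinSub hrel'),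
        add_joinSub] at hb2
      rw [hb2]
      congr 1
      funext j
      exact max_comm _ _
    rcases hmmin b hb _ hval' with h | h
    · rw [← h] at hgl
      exact grevlex_irrefl hgl
    · exact grevlex_asymm h hgl
  · rintro ⟨Γ, ⟨x0, hx0, rfl⟩, b, ⟨hbBA, hx0b⟩, ⟨τ, hτy, rfl⟩, havoid⟩
    set bt := valE c d α a (m b + τ) with hbt
    have hbtB : bt ∈ B := mem_B_of_rep hBgen _
    refine ⟨bt, hbtB, ?_⟩
    set bxs := valE c d α a (xpart c d (m bt)) with hbxs
    have hbxsBA : bxs ∈ BA B α := xval_mem_BA hα hBgen hdeg hmval hmmin hbtB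
    have hdecomp : m bt = m bxs + ypart c d (m bt) := mb_decomp hα hBgen hmval hmmin hbtB
    set τs := ypart c d (m bt) with hτs
    have hτsy : yOnly c d τs := yOnly_ypart _
    have hbteq : bxs + valE c d α a τs = b + valE c d α a τ := by
      have h2 := hmval bt hbtB
      rw [hdecomp, valE_add, hmval bxs hbxsBA.1] at h2
      rw [h2, hbt, valE_add, hmval b hbBA.1]
    have hrelb : Rel α b bxs := by
      intro j
      have hj := congrFun hbteq j
      simp only [Pi.add_apply] at hj
      rw [valE_yOnly_apply hτsy, valE_yOnly_apply hτy] at hj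
      refine ⟨(τs (Fin.natAdd c j) : ℤ) - τ (Fin.natAdd c j), ?_⟩
      have hj' : (bxs j : ℤ) + τs (Fin.natAdd c j) * α = b j + τ (Fin.natAdd c j) * α := by
        exact_mod_cast hj
      push_cast
      linarith
    by_cases hbb : b = bxs
    · rw [← hbb] at hbteq
      have hττ : τ = τs := yOnly_inj hα hτy hτsy (add_left_cancel hbteq).symm
      rw [hdecomp, ← hbb, ← hττ]
    · obtain ⟨k, hkne, hka⟩ := exists_last_diff hbb
      have hrelxb : Rel α bxs b := Rel.symm' hrelb
      rcases lt_or_gt_of_ne hkne with hlt | hlt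
      · -- b k < bxs k : ltCls b bxs, contradict minimality of m bt
        exfalso
        have hltc : ltCls b bxs := ⟨k, hlt, hka⟩
        have hg' : ∀ j, α ∣ joinSub b bxs j := dvd_joinSub hrelb
        have hle' : ∀ j, joinSub b bxs j ≤ valE c d α a τs j := by
          intro j
          have hj := congrFun hbteq j
          simp only [Pi.add_apply] at hj
          show max (b j) (bxs j) - bxs j ≤ _
          rcases le_total (b j) (bxs j) with h' | h'
          · rw [max_eq_right h']
            omega
          · rw [max_eq_left h']
            omega
        obtain ⟨ρ, hρy, hρeq⟩ := split_yOnly hα hτsy hg' hle'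
        have hswap := swap_grevlex hα hBgen hdeg hmval hbBA hbxsBA hrelb hltc
        have hgl : grevlex ((m b + ySig c d α (joinSub bxs b)) + ρ) (m bt) := by
          rw [hdecomp, hρeq, ← add_assoc]
          exact grevlex_add_right ρ hswap
        have hval' : valE c d α a ((m b + ySig c d α (joinSub bxs b)) + ρ) = bt := by
          rw [valE_add, valE_add, hmval b hbBA.1, valE_ySig hα (dvd_joinSub hrelxb),
            add_joinSub]
          have h2 := hmval bt hbtB
          rw [hdecomp, valE_add, hmval bxs hbxsBA.1, hρeq, valE_add,
            valE_ySig hα hg', ← add_assoc, add_joinSub] at h2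
          rw [← h2]
          congr 1
          funext j
          exact max_comm _ _
        rcases hmmin bt hbtB _ hval' with h | h
        · rw [← h] at hgl
          exact grevlex_irrefl hgl
        · exact grevlex_asymm h hgl
      · -- bxs k < b k : ltCls bxs b, contradict avoidance
        exfalso
        have hltc : ltCls bxs b := ⟨k, hlt, fun l hl => (hka l hl).symm⟩
        have hg : ∀ j, α ∣ joinSub bxs b j := dvd_joinSub hrelxb
        have hle : ∀ j, joinSub bxs b j ≤ valE c d α a τ j := by
          intro j
          have hj := congrFun hbteq j
          simp only [Pi.add_apply] at hj
          show max (bxs j) (b j) - b j ≤ _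
          rcases le_total (bxs j) (b j) with h' | h'
          · rw [max_eq_right h']
            omega
          · rw [max_eq_left h']
            omega
        obtain ⟨τ'', hτ''y, hτeq⟩ := split_yOnly hα hτy hg hle
        have hmg : m (joinSub bxs b) = ySig c d α (joinSub bxs b) :=
          m_Amon hα hBgen hdeg hmval hmmin ((mem_Amon_iff hα).2 hg)
        exact havoid bxs ⟨hbxsBA, Rel.trans' hx0b hrelb⟩ hltc
          ⟨τ'', hτ''y, by rw [hτeq, hmg, ← add_assoc]⟩
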